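/- Let Z ∼ N(μ, σ²) with σ > 0 and let f : ℝ → ℝ be differentiable with f and f' of polynomial growth. Writing Z = μ + σ·ε with ε ∼ N(0,1), we have ∂/∂μ E[f(Z)] = E[f'(μ + σ·ε)] and ∂/∂σ E[f(Z)] = E[f'(μ + σ·ε)·ε]. -/

import Mathlib

open MeasureTheory ProbabilityTheory Real

lemma helper1 (k : ℕ) :
    Integrable (fun x : ℝ => (1 + |x|) ^ k * Real.exp (-(2⁻¹ : ℝ) * x ^ 2)) := by
  have h : ∀ i : ℕ, Integrable (fun x : ℝ => |x| ^ i * Real.exp (-(2⁻¹ : ℝ) * x ^ 2)) := by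
    intro i
    have := (integrable_rpow_mul_exp_neg_mul_sq (b := 2⁻¹) (by norm_num)
      (s := (i : ℝ)) (lt_of_lt_of_le neg_one_lt_zero (Nat.cast_nonneg i))).abs
    simpa [Real.rpow_natCast, abs_mul, abs_pow, abs_of_nonneg (Real.exp_pos _).le] using this
  have heq : (fun x : ℝ => (1 + |x|) ^ k * Real.exp (-(2⁻¹ : ℝ) * x ^ 2)) =
      fun x => ∑ i ∈ Finset.range (k + 1),
        (k.choose i : ℝ) * (|x| ^ (k - i) * Real.exp (-(2⁻¹ : ℝ) * x ^ 2)) := by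
    funext x
    rw [add_pow, Finset.sum_mul]
    refine Finset.sum_congr rfl fun i _ => ?_
    simp only [one_pow]
    ring
  rw [heq]
  exact integrable_finset_sum _ fun i _ => ((h (k - i)).const_mul _)

lemma helper2 {g : ℝ → ℝ} (hg : Measurable g) {C : ℝ} {k : ℕ}
    (hb : ∀ x, |g x| ≤ C * (1 + |x|) ^ k) : Integrable g (gaussianReal 0 1) := by
  rw [gaussianReal_of_var_ne_zero 0 one_ne_zero,
    integrable_withDensity_iff (measurable_gaussianPDF 0 1)
      (ae_of_all _ fun x => ENNReal.ofReal_lt_top)]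
  have hpdf : ∀ x : ℝ, (gaussianPDF 0 1 x).toReal = gaussianPDFReal 0 1 x := fun x =>
    ENNReal.toReal_ofReal (gaussianPDFReal_nonneg 0 1 x)
  refine Integrable.mono ((helper1 k).const_mul (|C| * (Real.sqrt (2 * π))⁻¹))
    ((hg.mul (measurable_gaussianPDF 0 1).ennreal_toReal).aestronglyMeasurable)
    (ae_of_all _ fun x => ?_)
  have hp : gaussianPDFReal 0 1 x = (Real.sqrt (2 * π))⁻¹ * Real.exp (-(2⁻¹ : ℝ) * x ^ 2) := by
    simp only [gaussianPDFReal, NNReal.coe_one, mul_one, sub_zero]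
    congr 1
    ring
  have h2 : (0 : ℝ) ≤ (Real.sqrt (2 * π))⁻¹ * Real.exp (-(2⁻¹ : ℝ) * x ^ 2) := by positivity
  have h1 : |g x| ≤ |C| * (1 + |x|) ^ k :=
    (hb x).trans (mul_le_mul_of_nonneg_right (le_abs_self C) (by positivity))
  rw [Real.norm_eq_abs, Real.norm_eq_abs, abs_mul, hpdf, hp, abs_of_nonneg h2,
    abs_of_nonneg (show (0:ℝ) ≤ |C| * (Real.sqrt (2 * π))⁻¹ *
      ((1 + |x|) ^ k * Real.exp (-(2⁻¹ : ℝ) * x ^ 2)) by positivity)]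
  calc |g x| * ((Real.sqrt (2 * π))⁻¹ * Real.exp (-(2⁻¹ : ℝ) * x ^ 2))
      ≤ (|C| * (1 + |x|) ^ k) * ((Real.sqrt (2 * π))⁻¹ * Real.exp (-(2⁻¹ : ℝ) * x ^ 2)) :=
        mul_le_mul_of_nonneg_right h1 h2
    _ = |C| * (Real.sqrt (2 * π))⁻¹ * ((1 + |x|) ^ k * Real.exp (-(2⁻¹ : ℝ) * x ^ 2)) := by ring

lemma helper3 {Ω : Type*} {mΩ : MeasurableSpace Ω} {P : Measure Ω}
    {e : Ω → ℝ} (he : Measurable e) (hgauss : Measure.map e P = gaussianReal 0 1)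
    {g : ℝ → ℝ} (hg : Measurable g) {C : ℝ} {k : ℕ}
    (hb : ∀ x, |g x| ≤ C * (1 + |x|) ^ k) : Integrable (fun ω => g (e ω)) P := by
  have h := helper2 hg hb
  rw [← hgauss] at h
  exact (integrable_map_measure hg.aestronglyMeasurable he.aemeasurable).mp h

theorem gaussian_reparameterization_gradients
    {Ω : Type*} {mΩ : MeasurableSpace Ω} {P : Measure Ω} [IsProbabilityMeasure P]
    (e : Ω → ℝ) (he : Measurable e)
    (hgauss : Measure.map e P = gaussianReal 0 1)
    (f : ℝ → ℝ) (hf : Differentiable ℝ f)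
    (hfgrowth : ∃ C k, ∀ x : ℝ, |f x| ≤ C * (1 + |x|) ^ k)
    (hf'growth : ∃ C k, ∀ x : ℝ, |deriv f x| ≤ C * (1 + |x|) ^ k)
    (m σ : ℝ) (hσ : 0 < σ) :
    HasDerivAt (fun m' : ℝ => ∫ ω, f (m' + σ * e ω) ∂P)
      (∫ ω, deriv f (m + σ * e ω) ∂P) m
    ∧ HasDerivAt (fun s : ℝ => ∫ ω, f (m + s * e ω) ∂P)
      (∫ ω, deriv f (m + σ * e ω) * e ω ∂P) σ := by
  obtain ⟨C, k, hCk⟩ := hfgrowth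
  obtain ⟨D, l, hDl⟩ := hf'growth
  have hfm : Measurable f := hf.continuous.measurable
  have hf'm : Measurable (deriv f) := measurable_deriv f
  -- common integrability of F at the base point
  have hint : Integrable (fun ω => f (m + σ * e ω)) P := by
    refine helper3 he hgauss (g := fun x => f (m + σ * x))
      (hfm.comp (measurable_const.add (measurable_id.const_mul σ)))
      (C := |C| * (1 + |m| + σ) ^ k) (k := k) fun x => ?_
    have h1 : |f (m + σ * x)| ≤ |C| * (1 + |m + σ * x|) ^ k :=
      (hCk _).trans (mul_le_mul_of_nonneg_right (le_abs_self C) (by positivity))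
    refine h1.trans ?_
    rw [mul_assoc, ← mul_pow]
    refine mul_le_mul_of_nonneg_left (pow_le_pow_left₀ (by positivity) ?_ k) (abs_nonneg C)
    have h4 : |m + σ * x| ≤ |m| + σ * |x| := by
      calc |m + σ * x| ≤ |m| + |σ * x| := abs_add_le _ _
        _ = |m| + σ * |x| := by rw [abs_mul, abs_of_pos hσ]
    nlinarith [abs_nonneg x, abs_nonneg m, hσ.le]
  constructor
  · -- derivative in m
    have key := hasDerivAt_integral_of_dominated_loc_of_deriv_le (μ := P) (x₀ := m)
      (F := fun m' ω => f (m' + σ * e ω)) (F' := fun m' ω => deriv f (m' + σ * e ω))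
      (bound := fun ω => |D| * (2 + |m| + σ * |e ω|) ^ l)
      (Metric.ball_mem_nhds _ one_pos)
      (Filter.Eventually.of_forall fun m' =>
        (hfm.comp (measurable_const.add (he.const_mul σ))).aestronglyMeasurable)
      hint
      (hf'm.comp (measurable_const.add (he.const_mul σ))).aestronglyMeasurable
      ?hbound ?hbint ?hdiff
    · exact key.2
    case hbound =>
      refine ae_of_all _ fun ω m' hm' => ?_
      rw [Real.norm_eq_abs]
      have hm'' : |m'| ≤ |m| + 1 := by
        have h5 := mem_ball_iff_norm.mp hm'
        rw [Real.norm_eq_abs] at h5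
        have := abs_sub_abs_le_abs_sub m' m
        linarith
      have h4 : |m' + σ * e ω| ≤ |m| + 1 + σ * |e ω| := by
        calc |m' + σ * e ω| ≤ |m'| + |σ * e ω| := abs_add_le _ _
          _ ≤ |m| + 1 + σ * |e ω| := by rw [abs_mul, abs_of_pos hσ]; linarith
      calc |deriv f (m' + σ * e ω)| ≤ D * (1 + |m' + σ * e ω|) ^ l := hDl _
        _ ≤ |D| * (1 + |m' + σ * e ω|) ^ l :=
            mul_le_mul_of_nonneg_right (le_abs_self D) (by positivity)
        _ ≤ |D| * (2 + |m| + σ * |e ω|) ^ l :=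
            mul_le_mul_of_nonneg_left (pow_le_pow_left₀ (by positivity) (by linarith) l)
              (abs_nonneg D)
    case hbint =>
      refine helper3 he hgauss (g := fun x => |D| * (2 + |m| + σ * |x|) ^ l)
        ((((measurable_abs.const_mul σ).const_add (2 + |m|)).pow_const l).const_mul |D|)
        (C := |D| * (2 + |m| + σ) ^ l) (k := l) fun x => ?_
      rw [abs_of_nonneg (by positivity : (0:ℝ) ≤ |D| * (2 + |m| + σ * |x|) ^ l),
        mul_assoc, ← mul_pow]
      refine mul_le_mul_of_nonneg_left (pow_le_pow_left₀ (by positivity) ?_ l) (abs_nonneg D)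
      nlinarith [abs_nonneg x, abs_nonneg m, hσ.le]
    case hdiff =>
      refine ae_of_all _ fun ω m' _ => ?_
      have h := ((hf (m' + σ * e ω)).hasDerivAt).comp m'
        ((hasDerivAt_id m').add_const (σ * e ω))
      simpa [Function.comp_def] using h
  · -- derivative in σ
    have key := hasDerivAt_integral_of_dominated_loc_of_deriv_le (μ := P) (x₀ := σ)
      (F := fun s ω => f (m + s * e ω)) (F' := fun s ω => deriv f (m + s * e ω) * e ω)
      (bound := fun ω => |D| * (1 + |m| + (σ + 1) * |e ω|) ^ l * |e ω|)
      (Metric.ball_mem_nhds _ one_pos)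
      (Filter.Eventually.of_forall fun s =>
        (hfm.comp (measurable_const.add (he.const_mul s))).aestronglyMeasurable)
      hint
      ((hf'm.comp (measurable_const.add (he.const_mul σ))).mul he).aestronglyMeasurable
      ?hbound2 ?hbint2 ?hdiff2
    · exact key.2
    case hbound2 =>
      refine ae_of_all _ fun ω s hs => ?_
      rw [Real.norm_eq_abs, abs_mul]
      have hs' : |s| ≤ σ + 1 := by
        have h5 := mem_ball_iff_norm.mp hs
        rw [Real.norm_eq_abs] at h5
        have := abs_sub_abs_le_abs_sub s σ
        rw [abs_of_pos hσ] at this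
        linarith
      have h4 : |m + s * e ω| ≤ |m| + (σ + 1) * |e ω| := by
        calc |m + s * e ω| ≤ |m| + |s * e ω| := abs_add_le _ _
          _ ≤ |m| + (σ + 1) * |e ω| := by
              rw [abs_mul]
              have := mul_le_mul_of_nonneg_right hs' (abs_nonneg (e ω))
              linarith
      refine mul_le_mul_of_nonneg_right ?_ (abs_nonneg (e ω))
      calc |deriv f (m + s * e ω)| ≤ D * (1 + |m + s * e ω|) ^ l := hDl _
        _ ≤ |D| * (1 + |m + s * e ω|) ^ l :=
            mul_le_mul_of_nonneg_right (le_abs_self D) (by positivity)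
        _ ≤ |D| * (1 + |m| + (σ + 1) * |e ω|) ^ l :=
            mul_le_mul_of_nonneg_left (pow_le_pow_left₀ (by positivity) (by linarith) l)
              (abs_nonneg D)
    case hbint2 =>
      refine helper3 he hgauss (g := fun x => |D| * (1 + |m| + (σ + 1) * |x|) ^ l * |x|)
        (((((measurable_abs.const_mul (σ + 1)).const_add (1 + |m|)).pow_const l).const_mul
          |D|).mul measurable_abs)
        (C := |D| * (2 + |m| + σ) ^ l) (k := l + 1) fun x => ?_
      have hx1 : |x| ≤ 1 + |x| := by linarith [abs_nonneg x]
      have hstep : (1 + |m| + (σ + 1) * |x|) ^ l ≤ (2 + |m| + σ) ^ l * (1 + |x|) ^ l := by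
        rw [← mul_pow]
        exact pow_le_pow_left₀ (by positivity)
          (by nlinarith [abs_nonneg x, abs_nonneg m, hσ.le]) l
      rw [abs_of_nonneg (by positivity :
        (0:ℝ) ≤ |D| * (1 + |m| + (σ + 1) * |x|) ^ l * |x|)]
      calc |D| * (1 + |m| + (σ + 1) * |x|) ^ l * |x|
          ≤ |D| * ((2 + |m| + σ) ^ l * (1 + |x|) ^ l) * (1 + |x|) :=
            mul_le_mul (mul_le_mul_of_nonneg_left hstep (abs_nonneg D)) hx1 (abs_nonneg x)
              (by positivity)
        _ = |D| * (2 + |m| + σ) ^ l * (1 + |x|) ^ (l + 1) := by rw [pow_succ]; ring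
    case hdiff2 =>
      refine ae_of_all _ fun ω s _ => ?_
      have h := ((hf (m + s * e ω)).hasDerivAt).comp s
        (((hasDerivAt_id s).mul_const (e ω)).const_add m)
      simpa [Function.comp_def] using h
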